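/- Let P ⊆ ℝ^d be a full-dimensional lattice polytope whose codegree a equals 1 (i.e. int(P) ∩ ℤ^d ≠ ∅) and which satisfies P = ⌊P⌋ + {P}. Then the remainder polytope {P} is a reflexive polytope. -/

import Mathlib

open Set Pointwise

/-- The set of lattice points of `ℝ^d`. -/
def latticePoints (d : ℕ) : Set (Fin d → ℝ) :=
  {x | ∀ i, ∃ z : ℤ, x i = (z : ℝ)}

/-- A lattice polytope: the convex hull of a finite set of lattice points. -/
def IsLatticePolytope {d : ℕ} (P : Set (Fin d → ℝ)) : Prop :=
  ∃ V : Finset (Fin d → ℝ), (V : Set (Fin d → ℝ)) ⊆ latticePoints d ∧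
    P = convexHull ℝ (V : Set (Fin d → ℝ))

/-- The natural pairing of an integral linear functional with a point of `ℝ^d`. -/
def pairing {d : ℕ} (n : Fin d → ℤ) (x : Fin d → ℝ) : ℝ :=
  ∑ i, (n i : ℝ) * x i

/-- `P = {x | n_F(x) ≥ -h_F}` is an irredundant presentation with primitive
integral inner normals, i.e. the facet presentation of `P`. -/
def IsFacetPresentation {d m : ℕ} (P : Set (Fin d → ℝ))
    (n : Fin m → Fin d → ℤ) (h : Fin m → ℤ) : Prop :=
  P = {x | ∀ i, pairing (n i) x ≥ -(h i : ℝ)} ∧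
  (∀ i, Finset.univ.gcd (n i) = 1) ∧
  (∀ i, ∃ x : Fin d → ℝ, pairing (n i) x < -(h i : ℝ) ∧
    ∀ j, j ≠ i → pairing (n j) x ≥ -(h j : ℝ))

/-- `a` is the codegree of `P`: the least `k ≥ 1` such that `int(kP)` contains
a lattice point. -/
def IsCodegree {d : ℕ} (P : Set (Fin d → ℝ)) (a : ℕ) : Prop :=
  1 ≤ a ∧ (interior ((a : ℝ) • P) ∩ latticePoints d).Nonempty ∧
    ∀ k : ℕ, 1 ≤ k → (interior ((k : ℝ) • P) ∩ latticePoints d).Nonempty → a ≤ k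

/-- The floor polytope `⌊R⌋ = conv(int(R) ∩ ℤ^d)`. -/
def floorPoly {d : ℕ} (R : Set (Fin d → ℝ)) : Set (Fin d → ℝ) :=
  convexHull ℝ (interior R ∩ latticePoints d)

/-- The remainder polytope `{P} = conv{x ∈ ℤ^d | n_F(x) ≥ (a-1)h_F - 1}`,
defined in terms of the facet presentation data and the codegree `a`. -/
def remPoly {d m : ℕ} (n : Fin m → Fin d → ℤ) (h : Fin m → ℤ) (a : ℕ) :
    Set (Fin d → ℝ) :=
  convexHull ℝ {x | x ∈ latticePoints d ∧
    ∀ i, pairing (n i) x ≥ ((a : ℝ) - 1) * (h i : ℝ) - 1}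

/-- The cone `C_P ⊆ ℝ^d × ℝ` over `P`, in terms of the facet presentation. -/
def coneOver {d m : ℕ} (n : Fin m → Fin d → ℤ) (h : Fin m → ℤ) :
    Set ((Fin d → ℝ) × ℝ) :=
  {p | ∀ i, pairing (n i) p.1 ≥ -(p.2 * (h i : ℝ))}

/-- The interior `int(C_P)` of the cone over `P`. -/
def intCone {d m : ℕ} (n : Fin m → Fin d → ℤ) (h : Fin m → ℤ) :
    Set ((Fin d → ℝ) × ℝ) :=
  {p | ∀ i, pairing (n i) p.1 > -(p.2 * (h i : ℝ))}

/-- The anticanonical set `ant(C_P)` of the cone over `P`. -/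
def antCone {d m : ℕ} (n : Fin m → Fin d → ℤ) (h : Fin m → ℤ) :
    Set ((Fin d → ℝ) × ℝ) :=
  {p | ∀ i, pairing (n i) p.1 ≥ -(p.2 * (h i : ℝ)) - 1}

/-- Lattice points of `ℝ^d × ℝ = ℝ^{d+1}`. -/
def latticePairs (d : ℕ) : Set ((Fin d → ℝ) × ℝ) :=
  {p | p.1 ∈ latticePoints d ∧ ∃ z : ℤ, p.2 = (z : ℝ)}

/-- The nearly Gorenstein condition with respect to a given facet presentation:
`(C_P ∩ ℤ^{d+1}) \ {0} ⊆ (int(C_P) ∩ ℤ^{d+1}) + (ant(C_P) ∩ ℤ^{d+1})`. -/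
def NGIncl {d m : ℕ} (n : Fin m → Fin d → ℤ) (h : Fin m → ℤ) : Prop :=
  (coneOver n h ∩ latticePairs d) \ {(0 : (Fin d → ℝ) × ℝ)} ⊆
    (intCone n h ∩ latticePairs d) + (antCone n h ∩ latticePairs d)

/-- A full-dimensional lattice polytope is nearly Gorenstein if the nearly
Gorenstein inclusion holds for its facet presentation. -/
def NearlyGorenstein {d : ℕ} (P : Set (Fin d → ℝ)) : Prop :=
  ∃ (m : ℕ) (n : Fin m → Fin d → ℤ) (h : Fin m → ℤ),
    IsFacetPresentation P n h ∧ NGIncl n h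

/-- The polar dual `Q* = {y | y(x) ≥ -1 for all x ∈ Q}`. -/
def polarDual {d : ℕ} (Q : Set (Fin d → ℝ)) : Set (Fin d → ℝ) :=
  {y | ∀ x ∈ Q, (∑ i, y i * x i) ≥ -1}

/-- A reflexive polytope: a lattice polytope with `0` in its interior whose
polar dual is again a lattice polytope. -/
def IsReflexive {d : ℕ} (Q : Set (Fin d → ℝ)) : Prop :=
  IsLatticePolytope Q ∧ (0 : Fin d → ℝ) ∈ interior Q ∧
    IsLatticePolytope (polarDual Q)

/-- A Gorenstein polytope: some dilate `kP`, translated by a lattice vector,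
is reflexive. -/
def IsGorenstein {d : ℕ} (P : Set (Fin d → ℝ)) : Prop :=
  ∃ (k : ℕ) (w : Fin d → ℝ), 1 ≤ k ∧ w ∈ latticePoints d ∧
    IsReflexive ((fun x => x - w) '' ((k : ℝ) • P))

/-- The integer decomposition property. -/
def IsIDP {d : ℕ} (P : Set (Fin d → ℝ)) : Prop :=
  ∀ k : ℕ, 1 ≤ k → ∀ x ∈ ((k : ℝ) • P) ∩ latticePoints d,
    ∃ y : Fin k → Fin d → ℝ, (∀ j, y j ∈ P ∩ latticePoints d) ∧ x = ∑ j, y j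

/-- Minkowski indecomposability of a lattice polytope. -/
def IsIndecomposable {d : ℕ} (P : Set (Fin d → ℝ)) : Prop :=
  (¬ ∃ p : Fin d → ℝ, P = {p}) ∧
  ∀ P₁ P₂ : Set (Fin d → ℝ), IsLatticePolytope P₁ → IsLatticePolytope P₂ →
    P = P₁ + P₂ → (∃ p, P₁ = {p}) ∨ (∃ p, P₂ = {p})


section Helpers
open Set Pointwise

lemma pairing_add' {d : ℕ} (v : Fin d → ℤ) (x y : Fin d → ℝ) :
    pairing v (x + y) = pairing v x + pairing v y := by
  simp [pairing, mul_add, Finset.sum_add_distrib]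

lemma pairing_smul' {d : ℕ} (v : Fin d → ℤ) (c : ℝ) (x : Fin d → ℝ) :
    pairing v (c • x) = c * pairing v x := by
  simp only [pairing, Finset.mul_sum, Pi.smul_apply, smul_eq_mul]
  exact Finset.sum_congr rfl fun i _ => by ring

lemma pairing_isLinear' {d : ℕ} (v : Fin d → ℤ) : IsLinearMap ℝ (pairing v) :=
  ⟨pairing_add' v, fun c x => pairing_smul' v c x⟩

lemma pairing_continuous' {d : ℕ} (v : Fin d → ℤ) : Continuous (pairing v) := by
  unfold pairing
  exact continuous_finset_sum _ fun i _ => continuous_const.mul (continuous_apply i)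

lemma pairing_zero' {d : ℕ} (v : Fin d → ℤ) : pairing v 0 = 0 := by
  simp [pairing]

lemma pairing_int' {d : ℕ} (v : Fin d → ℤ) (x : Fin d → ℝ) (hx : x ∈ latticePoints d) :
    ∃ z : ℤ, pairing v x = (z : ℝ) := by
  choose z hz using hx
  exact ⟨∑ i, v i * z i, by simp [pairing, hz]⟩

lemma latticeBounded_finite' {d : ℕ} (s : Set (Fin d → ℝ))
    (hs : Bornology.IsBounded s) (hl : s ⊆ latticePoints d) : s.Finite := by
  obtain ⟨R, hR⟩ := hs.exists_norm_le
  set N : ℤ := ⌈R⌉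
  have key : s ⊆ (fun (z : Fin d → ℤ) (i : Fin d) => (z i : ℝ)) ''
      (Set.pi Set.univ (fun _ : Fin d => Set.Icc (-N) N)) := by
    intro x hx
    choose z hz using hl hx
    refine ⟨z, ?_, by funext i; exact (hz i).symm⟩
    intro i _
    have h1 : |x i| ≤ R := le_trans (by simpa using norm_le_pi_norm x i) (hR x hx)
    have h2 : |(z i : ℝ)| ≤ (N : ℝ) := by
      rw [← hz i]; exact h1.trans (Int.le_ceil R)
    rw [← Int.cast_abs, Int.cast_le] at h2
    rw [Set.mem_Icc]; exact abs_le.mp h2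
  exact Set.Finite.subset (Set.Finite.image _ (Set.Finite.pi fun _ => Set.finite_Icc _ _)) key

lemma convex_pairing_ge {d : ℕ} (v : Fin d → ℤ) (c : ℝ) :
    Convex ℝ {x : Fin d → ℝ | pairing v x ≥ c} :=
  convex_halfSpace_ge (pairing_isLinear' v) c

end Helpers

/-- A `(0,1)`-polytope: the convex hull of a set of `(0,1)`-vectors. -/
def Is01Polytope {d : ℕ} (P : Set (Fin d → ℝ)) : Prop :=
  ∃ V : Finset (Fin d → ℝ), (∀ v ∈ V, ∀ i, v i = 0 ∨ v i = 1) ∧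
    P = convexHull ℝ (V : Set (Fin d → ℝ))

theorem stmt_8 {d : ℕ} (hd : 1 ≤ d) (P : Set (Fin d → ℝ))
    (hP : IsLatticePolytope P) (hfull : (interior P).Nonempty)
    {m : ℕ} (n : Fin m → Fin d → ℤ) (h : Fin m → ℤ)
    (hpres : IsFacetPresentation P n h)
    (ha : IsCodegree P 1)
    (hdecomp : P = floorPoly P + remPoly n h 1) :
    IsReflexive (remPoly n h 1) := by
  classical
  obtain ⟨V, hVlat, hPV⟩ := hP
  obtain ⟨hPeq, hgcd, -⟩ := hpres
  have hPcompact : IsCompact P := by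
    rw [hPV]; exact V.finite_toSet.isCompact_convexHull (𝕜 := ℝ)
  have hPbdd : Bornology.IsBounded P := hPcompact.isBounded
  -- interior lattice point
  obtain ⟨u₀, hu₀int, hu₀lat⟩ : ∃ u₀, u₀ ∈ interior P ∧ u₀ ∈ latticePoints d := by
    obtain ⟨u, hu1, hu2⟩ := ha.2.1
    refine ⟨u, ?_, hu2⟩
    have h1 : ((1:ℕ):ℝ) • P = P := by
      rw [Nat.cast_one, one_smul]
    rwa [h1] at hu1
  set G : Set (Fin d → ℝ) := interior P ∩ latticePoints d with hGdef
  set S : Set (Fin d → ℝ) := {x | x ∈ latticePoints d ∧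
      ∀ i, pairing (n i) x ≥ (((1:ℕ):ℝ) - 1) * (h i : ℝ) - 1} with hSdef
  have hQrem : remPoly n h 1 = convexHull ℝ S := rfl
  have hFfloor : floorPoly P = convexHull ℝ G := rfl
  have hSmem : ∀ x, x ∈ S ↔ x ∈ latticePoints d ∧ ∀ i, pairing (n i) x ≥ -1 := by
    intro x
    constructor
    · rintro ⟨h1, h2⟩
      refine ⟨h1, fun i => ?_⟩
      have := h2 i; push_cast at this ⊢; linarith
    · rintro ⟨h1, h2⟩
      refine ⟨h1, fun i => ?_⟩
      have := h2 i; push_cast; linarith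
  set Q' : Set (Fin d → ℝ) := {x | ∀ i, pairing (n i) x ≥ -1} with hQ'def
  -- strict inequalities on interior
  have hstrict : ∀ u ∈ interior P, ∀ i, pairing (n i) u > -(h i : ℝ) := by
    intro u hu i
    have hnne : n i ≠ 0 := by
      intro h0
      have hg := hgcd i
      have hz : Finset.univ.gcd (n i) = 0 :=
        Finset.gcd_eq_zero_iff.mpr (fun j _ => by rw [h0]; rfl)
      rw [hg] at hz
      exact one_ne_zero hz
    obtain ⟨j, hj⟩ : ∃ j, n i j ≠ 0 := by
      by_contra hc
      push_neg at hc
      exact hnne (funext hc)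
    set s : ℝ := ∑ k, ((n i k : ℝ)) * ((n i k : ℝ)) with hsdef
    have hspos : 0 < s := by
      have hterm : ∀ k ∈ Finset.univ, (0:ℝ) ≤ (n i k : ℝ) * (n i k : ℝ) :=
        fun k _ => mul_self_nonneg _
      refine Finset.sum_pos' hterm ⟨j, Finset.mem_univ j, ?_⟩
      exact mul_self_pos.mpr (Int.cast_ne_zero.mpr hj)
    obtain ⟨ε, hε, hball⟩ := Metric.isOpen_iff.mp isOpen_interior u hu
    set nr : Fin d → ℝ := fun k => (n i k : ℝ) with hnrdef
    set δ : ℝ := ε / (2 * (‖nr‖ + 1)) with hδdef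
    have hδpos : 0 < δ := by
      apply div_pos hε
      positivity
    have hmemP : u + (-δ) • nr ∈ P := by
      apply interior_subset
      apply hball
      rw [Metric.mem_ball, dist_eq_norm]
      have he : u + (-δ) • nr - u = (-δ) • nr := by abel
      rw [he, norm_smul]
      have h1 : ‖(-δ : ℝ)‖ = δ := by
        rw [norm_neg, Real.norm_of_nonneg hδpos.le]
      rw [h1]
      have h2 : ‖nr‖ < ‖nr‖ + 1 := by linarith
      calc δ * ‖nr‖ ≤ δ * (‖nr‖ + 1) := by nlinarith [norm_nonneg nr]
        _ = ε / (2 * (‖nr‖ + 1)) * (‖nr‖ + 1) := rfl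
        _ = ε / 2 := by
            field_simp
        _ < ε := by linarith
    have hval : pairing (n i) (u + (-δ) • nr) = pairing (n i) u - δ * s := by
      rw [pairing_add', pairing_smul']
      have : pairing (n i) nr = s := by
        simp [pairing, hnrdef, hsdef]
      rw [this]; ring
    have hge : pairing (n i) (u + (-δ) • nr) ≥ -(h i : ℝ) := by
      have := hPeq ▸ hmemP
      exact this i
    rw [hval] at hge
    nlinarith
  -- lattice interior points satisfy ≥ -h + 1
  have hGint : ∀ u ∈ G, ∀ i, pairing (n i) u ≥ -(h i : ℝ) + 1 := by
    rintro u ⟨huint, hulat⟩ i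
    obtain ⟨z, hz⟩ := pairing_int' (n i) u hulat
    have h1 : pairing (n i) u > -(h i : ℝ) := hstrict u huint i
    rw [hz] at h1 ⊢
    have h2 : -(h i) < z := by exact_mod_cast h1
    have h3 : -(h i) + 1 ≤ z := by omega
    calc (z:ℝ) ≥ ((-(h i) + 1 : ℤ) : ℝ) := by exact_mod_cast h3
      _ = -(h i : ℝ) + 1 := by push_cast; ring
  have hFint : ∀ u ∈ convexHull ℝ G, ∀ i, pairing (n i) u ≥ -(h i : ℝ) + 1 := by
    intro u hu i
    have hsub : convexHull ℝ G ⊆ {x | pairing (n i) x ≥ -(h i : ℝ) + 1} :=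
      convexHull_min (fun v hv => hGint v hv i) (convex_pairing_ge (n i) _)
    exact hsub hu
  have hu₀F : u₀ ∈ convexHull ℝ G := subset_convexHull ℝ G ⟨hu₀int, hu₀lat⟩
  -- sums of floor and Q' points lie in P
  have hFQ'P : ∀ u ∈ convexHull ℝ G, ∀ x ∈ Q', u + x ∈ P := by
    intro u hu x hx
    rw [hPeq]
    intro i
    rw [pairing_add']
    have h1 := hFint u hu i
    have h2 := hx i
    linarith
  -- Q' is bounded
  have hQ'bdd : Bornology.IsBounded Q' := by
    obtain ⟨R, hR⟩ := hPbdd.exists_norm_le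
    rw [isBounded_iff_forall_norm_le]
    refine ⟨R + ‖u₀‖, fun x hx => ?_⟩
    have h1 : u₀ + x ∈ P := hFQ'P u₀ hu₀F x hx
    have h2 : ‖u₀ + x‖ ≤ R := hR _ h1
    calc ‖x‖ = ‖u₀ + x - u₀‖ := by rw [add_sub_cancel_left]
      _ ≤ ‖u₀ + x‖ + ‖u₀‖ := norm_sub_le _ _
      _ ≤ R + ‖u₀‖ := by linarith
  have hSQ' : S ⊆ Q' := fun x hx => ((hSmem x).mp hx).2
  have hSfin : S.Finite :=
    latticeBounded_finite' S (hQ'bdd.subset hSQ') (fun x hx => ((hSmem x).mp hx).1)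
  have hGfin : G.Finite :=
    latticeBounded_finite' G (hPbdd.subset (fun x hx => interior_subset hx.1))
      (fun x hx => hx.2)
  have hQconv : Convex ℝ (convexHull ℝ S) := convex_convexHull ℝ S
  have hQclosed : IsClosed (convexHull ℝ S) := hSfin.isClosed_convexHull (𝕜 := ℝ)
  have hQQ' : convexHull ℝ S ⊆ Q' := by
    apply convexHull_min hSQ'
    have he : Q' = ⋂ i, {x : Fin d → ℝ | pairing (n i) x ≥ -1} := by
      ext x; simp [hQ'def]
    rw [he]
    exact convex_iInter fun i => convex_pairing_ge (n i) _
  have hFcompact : IsCompact (convexHull ℝ G) := hGfin.isCompact_convexHull (𝕜 := ℝ)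
  -- MAIN LEMMA: Q' ⊆ Q
  have hQ'Q : Q' ⊆ convexHull ℝ S := by
    intro x hx
    by_contra hxQ
    obtain ⟨f, u, hfa, hux⟩ := geometric_hahn_banach_closed_point hQconv hQclosed hxQ
    obtain ⟨us, husF, hmax⟩ :=
      hFcompact.exists_isMaxOn ⟨u₀, hu₀F⟩ f.continuous.continuousOn
    have hmem : us + x ∈ P := hFQ'P us husF x hx
    rw [hdecomp, hFfloor, hQrem] at hmem
    obtain ⟨u', hu', w, hw, huw⟩ := Set.mem_add.mp hmem
    have heq : f u' + f w = f us + f x := by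
      rw [← map_add, ← map_add, huw]
    have h1 : f u' ≤ f us := hmax hu'
    have h2 : f w < u := hfa w hw
    linarith
  -- PART 1: lattice polytope
  have part1 : IsLatticePolytope (remPoly n h 1) := by
    refine ⟨hSfin.toFinset, ?_, ?_⟩
    · rw [Set.Finite.coe_toFinset]
      exact fun x hx => ((hSmem x).mp hx).1
    · rw [hQrem, Set.Finite.coe_toFinset]
  -- PART 2: 0 in interior
  have part2 : (0 : Fin d → ℝ) ∈ interior (remPoly n h 1) := by
    set U : Set (Fin d → ℝ) := {x | ∀ i, pairing (n i) x > -1} with hUdef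
    have hUopen : IsOpen U := by
      have he : U = ⋂ i, {x : Fin d → ℝ | pairing (n i) x > -1} := by
        ext x; simp [hUdef]
      rw [he]
      exact isOpen_iInter_of_finite fun i =>
        isOpen_lt continuous_const (pairing_continuous' (n i))
    have hUQ : U ⊆ remPoly n h 1 := by
      rw [hQrem]
      exact fun x hx => hQ'Q (fun i => le_of_lt (hx i))
    have h0U : (0 : Fin d → ℝ) ∈ U := by
      intro i
      rw [pairing_zero']
      norm_num
    exact interior_maximal hUQ hUopen h0U
  -- PART 3: polar dual is a lattice polytope
  have part3 : IsLatticePolytope (polarDual (remPoly n h 1)) := by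
    set nreal : Fin m → (Fin d → ℝ) := fun i => fun j => ((n i j : ℤ) : ℝ) with hnreal
    set W : Finset (Fin d → ℝ) := insert 0 (Finset.image nreal Finset.univ) with hWdef
    have hlin : ∀ x : Fin d → ℝ, IsLinearMap ℝ (fun y : Fin d → ℝ => ∑ i, y i * x i) := by
      intro x
      constructor
      · intro y z
        simp [add_mul, Finset.sum_add_distrib]
      · intro c y
        simp only [Pi.smul_apply, smul_eq_mul, Finset.mul_sum]
        exact Finset.sum_congr rfl fun i _ => by ring
    have hDconv : Convex ℝ (polarDual (remPoly n h 1)) := by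
      have he : polarDual (remPoly n h 1) =
          ⋂ x ∈ remPoly n h 1, {y : Fin d → ℝ | (∑ i, y i * x i) ≥ -1} := by
        ext y; simp [polarDual]
      rw [he]
      exact convex_iInter fun x => convex_iInter fun hx =>
        convex_halfSpace_ge (hlin x) (-1)
    have hWsub : (W : Set (Fin d → ℝ)) ⊆ polarDual (remPoly n h 1) := by
      intro y hy
      rw [hWdef] at hy
      simp only [Finset.coe_insert, Set.mem_insert_iff, Finset.coe_image,
        Finset.coe_univ, Set.image_univ, Set.mem_range] at hy
      rcases hy with rfl | ⟨i, rfl⟩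
      · intro x hx
        simp
      · intro x hx
        have hxQ' : x ∈ Q' := hQQ' (hQrem ▸ hx)
        have := hxQ' i
        simpa [pairing, hnreal] using this
    have hsub1 : convexHull ℝ (W : Set (Fin d → ℝ)) ⊆ polarDual (remPoly n h 1) :=
      convexHull_min hWsub hDconv
    have hsub2 : polarDual (remPoly n h 1) ⊆ convexHull ℝ (W : Set (Fin d → ℝ)) := by
      intro y hy
      by_contra hyn
      have hKclosed : IsClosed (convexHull ℝ (W : Set (Fin d → ℝ))) :=
        W.finite_toSet.isClosed_convexHull (𝕜 := ℝ)
      obtain ⟨f, u, hfa, huy⟩ :=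
        geometric_hahn_banach_closed_point (convex_convexHull ℝ _) hKclosed hyn
      have h0W : (0 : Fin d → ℝ) ∈ convexHull ℝ (W : Set (Fin d → ℝ)) :=
        subset_convexHull ℝ _ (by simp [hWdef])
      have hu0 : 0 < u := by
        have := hfa 0 h0W
        simpa using this
      set g : Fin d → ℝ := fun j => f (Pi.single j 1) with hgdef
      have hfrep : ∀ z : Fin d → ℝ, f z = ∑ j, z j * g j := by
        intro z
        have hz : z = ∑ j, z j • (Pi.single j (1:ℝ) : Fin d → ℝ) := by
          funext k
          simp [Finset.sum_apply, Pi.single_apply]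
        conv_lhs => rw [hz]
        rw [map_sum]
        exact Finset.sum_congr rfl fun j _ => by rw [map_smul]; simp [hgdef]
      set x : Fin d → ℝ := (-(1:ℝ)/u) • g with hxdef
      have hcneg : -(1:ℝ)/u < 0 := by
        apply div_neg_of_neg_of_pos <;> [norm_num; exact hu0]
      have hxQ' : x ∈ Q' := by
        intro i
        have hfn : f (nreal i) < u := by
          apply hfa
          apply subset_convexHull
          simp only [hWdef, Finset.coe_insert, Set.mem_insert_iff, Finset.coe_image,
            Finset.coe_univ, Set.image_univ, Set.mem_range]
          exact Or.inr ⟨i, rfl⟩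
        have hval : pairing (n i) x = (-(1:ℝ)/u) * f (nreal i) := by
          rw [hfrep]
          simp only [pairing, hxdef, Pi.smul_apply, smul_eq_mul, Finset.mul_sum, hnreal]
          exact Finset.sum_congr rfl fun j _ => by ring
        rw [hval]
        have h1 : (-(1:ℝ)/u) * u < (-(1:ℝ)/u) * f (nreal i) :=
          mul_lt_mul_of_neg_left hfn hcneg
        have h2 : (-(1:ℝ)/u) * u = -1 := by
          field_simp
        linarith
      have hxy : ∑ i, y i * x i < -1 := by
        have hval : ∑ i, y i * x i = (-(1:ℝ)/u) * f y := by
          rw [hfrep]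
          simp only [hxdef, Pi.smul_apply, smul_eq_mul, Finset.mul_sum]
          exact Finset.sum_congr rfl fun j _ => by ring
        rw [hval]
        have h1 : (-(1:ℝ)/u) * f y < (-(1:ℝ)/u) * u :=
          mul_lt_mul_of_neg_left huy hcneg
        have h2 : (-(1:ℝ)/u) * u = -1 := by
          field_simp
        linarith
      have hxQ : x ∈ remPoly n h 1 := by
        rw [hQrem]
        exact hQ'Q hxQ'
      have := hy x hxQ
      linarith
    refine ⟨W, ?_, le_antisymm hsub2 hsub1⟩
    rw [hWdef]
    intro y hy
    simp only [Finset.coe_insert, Set.mem_insert_iff, Finset.coe_image,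
      Finset.coe_univ, Set.image_univ, Set.mem_range] at hy
    rcases hy with rfl | ⟨i, rfl⟩
    · exact fun j => ⟨0, by simp⟩
    · exact fun j => ⟨n i j, rfl⟩
  exact ⟨part1, part2, part3⟩
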